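/- Let n ∈ ℕ, let \tilde{R}_n be a symmetrized Hammersley type point set with N = 2^{n+2} points (for an arbitrary fixed choice function σ), and let D be its local discrepancy function. For every k ∈ ℕ₀ with k < n and every m ∈ {0,…,2^k−1}, the Haar coefficients with one index equal to −1 vanish: μ_{(−1,k),(0,m)}(D) = ∫_{[0,1)^2} D(t)·h_{k,m}(t2) dt = 0 and μ_{(k,−1),(m,0)}(D) = ∫_{[0,1)^2} D(t)·h_{k,m}(t1) dt = 0. -/

import Mathlib

open MeasureTheory Set

/-- The L∞-normalized Haar function `h_{j,m}` on `[0,1)`: it is `+1` on the left half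
`[2m/2^{j+1}, (2m+1)/2^{j+1})` of the dyadic interval `I_{j,m}`, `-1` on the right half
`[(2m+1)/2^{j+1}, (2m+2)/2^{j+1})`, and `0` elsewhere. -/
noncomputable def haar (j m : ℕ) (t : ℝ) : ℝ :=
  if (2 * m : ℝ) / 2 ^ (j + 1) ≤ t ∧ t < (2 * m + 1 : ℝ) / 2 ^ (j + 1) then 1
  else if (2 * m + 1 : ℝ) / 2 ^ (j + 1) ≤ t ∧ t < (2 * m + 2 : ℝ) / 2 ^ (j + 1) then -1
  else 0

/-- First coordinate of a point of the Hammersley type point set: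
`t_n/2 + t_{n-1}/2^2 + ⋯ + t_1/2^n`, where the index `i : Fin n` corresponds to `t_{i+1}`,
so the digit `t i` gets divided by `2^{n - i}`. -/
noncomputable def hamX (n : ℕ) (t : Fin n → Bool) : ℝ :=
  ∑ i : Fin n, (if t i then (1 : ℝ) else 0) / 2 ^ (n - i.val)

/-- Second coordinate of a point of the Hammersley type point set:
`s_1/2 + s_2/2^2 + ⋯ + s_n/2^n` with `s_i = t_i` if `σ i = false` and `s_i = 1 - t_i`
if `σ i = true`, i.e. `s_i = t_i XOR σ i`. -/
noncomputable def hamY (n : ℕ) (σ : Fin n → Bool) (t : Fin n → Bool) : ℝ :=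
  ∑ i : Fin n, (if (t i).xor (σ i) then (1 : ℝ) else 0) / 2 ^ (i.val + 1)

/-- The points of the symmetrized Hammersley type multiset `R̃_n`, parametrized by a digit
vector `t` and two reflection bits: `(x,y)`, `(x,1-y)`, `(1-x,y)`, `(1-x,1-y)`. -/
noncomputable def symPoint (n : ℕ) (σ : Fin n → Bool) (z : (Fin n → Bool) × Bool × Bool) :
    ℝ × ℝ :=
  (if z.2.1 then 1 - hamX n z.1 else hamX n z.1,
   if z.2.2 then 1 - hamY n σ z.1 else hamY n σ z.1)

/-- The local discrepancy function of the symmetrized Hammersley type multiset `R̃_n`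
with `N = 2^{n+2}` points counted with multiplicity. -/
noncomputable def discSym (n : ℕ) (σ : Fin n → Bool) (t1 t2 : ℝ) : ℝ :=
  (∑ z : (Fin n → Bool) × Bool × Bool,
      if (symPoint n σ z).1 < t1 ∧ (symPoint n σ z).2 < t2 then (1 : ℝ) else 0) / 2 ^ (n + 2)
    - t1 * t2


set_option linter.unnecessarySeqFocus false

section AuxHaar
open intervalIntegral



def natVal (n : ℕ) (u : Fin n → Bool) : ℕ := ∑ i : Fin n, (if u i then 1 else 0) * 2 ^ i.val

noncomputable def binE (n : ℕ) : (Fin n → Bool) ≃ Fin (2 ^ n) :=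
  (Equiv.arrowCongr (Equiv.refl (Fin n)) finTwoEquiv.symm).trans finFunctionFinEquiv

lemma natVal_eq (n : ℕ) (u : Fin n → Bool) : natVal n u = (binE n u : ℕ) := by
  simp only [binE, Equiv.trans_apply, finFunctionFinEquiv_apply, natVal]
  refine Finset.sum_congr rfl fun i _ => ?_
  congr 1
  cases h : u i <;> simp [Equiv.arrowCongr, h] <;> decide

lemma natVal_lt (n : ℕ) (u : Fin n → Bool) : natVal n u < 2 ^ n := by
  rw [natVal_eq]; exact (binE n u).isLt

lemma sum_grid_nat (n : ℕ) (f : ℕ → ℝ) :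
    ∑ u : Fin n → Bool, f (natVal n u) = ∑ j ∈ Finset.range (2 ^ n), f j := by
  rw [← Fin.sum_univ_eq_sum_range f (2 ^ n), ← Equiv.sum_comp (binE n) (fun v => f (v : ℕ))]
  exact Finset.sum_congr rfl fun u _ => by rw [natVal_eq]

lemma hamX_eq (n : ℕ) (t : Fin n → Bool) : hamX n t = (natVal n t : ℝ) / 2 ^ n := by
  rw [hamX, natVal, Nat.cast_sum, Finset.sum_div]
  refine Finset.sum_congr rfl fun i _ => ?_
  have hi : i.val < n := i.isLt
  have h2 : (2:ℝ) ^ (n - i.val) * 2 ^ i.val = 2 ^ n := by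
    rw [← pow_add]; congr 1; omega
  cases h : t i <;> simp [h] <;> field_simp <;> nlinarith [h2]

lemma hamY_eq (n : ℕ) (σ : Fin n → Bool) (t : Fin n → Bool) :
    hamY n σ t = (natVal n (fun i => ((t i.rev).xor (σ i.rev))) : ℝ) / 2 ^ n := by
  rw [hamY, natVal, Nat.cast_sum, Finset.sum_div]
  rw [← Equiv.sum_comp (Fin.revPerm)
    (fun i : Fin n => ((((if (t i.rev).xor (σ i.rev) then (1:ℕ) else 0) * 2 ^ i.val : ℕ)) : ℝ) / 2 ^ n)]
  refine Finset.sum_congr rfl fun i _ => ?_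
  simp only [Fin.revPerm_apply, Fin.rev_rev]
  have hi : i.val < n := i.isLt
  have hrev : (Fin.rev i).val = n - 1 - i.val := by simp [Fin.rev]; omega
  have h2 : (2:ℝ) ^ (n - (i.val + 1)) * 2 ^ (i.val + 1) = 2 ^ n := by
    rw [← pow_add]; congr 1; omega
  cases h : (t i).xor (σ i) <;> simp [h, hrev] <;> field_simp <;> nlinarith [h2]

lemma sum_hamX (n : ℕ) (f : ℝ → ℝ) :
    ∑ t : Fin n → Bool, f (hamX n t) = ∑ j ∈ Finset.range (2 ^ n), f ((j : ℝ) / 2 ^ n) := by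
  rw [← sum_grid_nat n (fun j => f ((j : ℝ) / 2 ^ n))]
  exact Finset.sum_congr rfl fun t _ => by rw [hamX_eq]

lemma sum_hamY (n : ℕ) (σ : Fin n → Bool) (f : ℝ → ℝ) :
    ∑ t : Fin n → Bool, f (hamY n σ t) = ∑ j ∈ Finset.range (2 ^ n), f ((j : ℝ) / 2 ^ n) := by
  rw [← sum_grid_nat n (fun j => f ((j : ℝ) / 2 ^ n))]
  have hbij : Function.Bijective (fun (t : Fin n → Bool) (i : Fin n) => (t i.rev).xor (σ i.rev)) := by
    have h1 : Function.Bijective (fun (t : Fin n → Bool) => t ∘ Fin.rev) := by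
      refine Function.Involutive.bijective fun t => ?_
      funext i; simp [Function.comp, Fin.rev_rev]
    have h2 : Function.Bijective (fun (t : Fin n → Bool) (i : Fin n) => (t i).xor (σ i.rev)) := by
      refine Function.Involutive.bijective fun t => ?_
      funext i; simp
    exact h2.comp h1
  rw [← Function.Bijective.sum_comp hbij (fun u => f ((natVal n u : ℝ) / 2 ^ n))]
  exact Finset.sum_congr rfl fun t _ => by rw [hamY_eq]

lemma hamX_mem (n : ℕ) (t : Fin n → Bool) : hamX n t ∈ Icc (0:ℝ) 1 := by
  rw [hamX_eq]
  have h := natVal_lt n t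
  constructor
  · positivity
  · rw [div_le_one (by positivity)]
    calc ((natVal n t : ℝ)) ≤ 2 ^ n := by exact_mod_cast h.le
    _ = _ := by norm_num

lemma hamY_mem (n : ℕ) (σ t : Fin n → Bool) : hamY n σ t ∈ Icc (0:ℝ) 1 := by
  rw [hamY_eq]
  have h := natVal_lt n (fun i => ((t i.rev).xor (σ i.rev)))
  constructor
  · positivity
  · rw [div_le_one (by positivity)]
    calc _ ≤ ((2:ℝ)) ^ n := by exact_mod_cast h.le
    _ = _ := by norm_num



lemma indInt (y : ℝ) (hy : y ∈ Icc (0:ℝ) 1) :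
    ∫ t in Ico (0:ℝ) 1, (if y < t then (1:ℝ) else 0) = 1 - y := by
  have h1 : (fun t : ℝ => if y < t then (1:ℝ) else 0) = (Ioi y).indicator (fun _ => (1:ℝ)) := by
    funext t; simp [Set.indicator, Set.mem_Ioi]
  rw [h1, MeasureTheory.setIntegral_indicator measurableSet_Ioi]
  have h2 : Ico (0:ℝ) 1 ∩ Ioi y = Ioo y 1 := by
    ext t; simp only [mem_inter_iff, mem_Ico, mem_Ioi, mem_Ioo]
    constructor
    · rintro ⟨⟨_, h⟩, hy'⟩; exact ⟨hy', h⟩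
    · rintro ⟨h1', h2'⟩; exact ⟨⟨le_trans hy.1 h1'.le, h2'⟩, h1'⟩
  rw [h2]
  simp [Real.volume_Ioo, ENNReal.toReal_ofReal (by linarith [hy.2] : (0:ℝ) ≤ 1 - y), hy.2]

lemma indIntOn (y : ℝ) : IntegrableOn (fun t : ℝ => if y < t then (1:ℝ) else 0) (Ico 0 1) := by
  have h1 : (fun t : ℝ => if y < t then (1:ℝ) else 0) = (Ioi y).indicator (fun _ => (1:ℝ)) := by
    funext t; simp [Set.indicator, Set.mem_Ioi]
  rw [h1]
  exact (integrableOn_const (by simp [Real.volume_Ico])).indicator measurableSet_Ioi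

lemma tInt : ∫ t in Ico (0:ℝ) 1, t = 1/2 := by
  rw [setIntegral_congr_set Ico_ae_eq_Ioc, ← intervalIntegral.integral_of_le zero_le_one]
  simp

lemma tIntOn : IntegrableOn (fun t : ℝ => t) (Ico 0 1) :=
  (continuous_id.integrableOn_Icc (a:=(0:ℝ)) (b:=1)).mono_set Ico_subset_Icc_self

lemma haar_measurable (k m : ℕ) : Measurable (haar k m) := by
  unfold haar
  refine Measurable.ite ?_ measurable_const (Measurable.ite ?_ measurable_const measurable_const)
  · exact (measurableSet_Ico : MeasurableSet (Ico ((2*m:ℝ)/2^(k+1)) ((2*m+1:ℝ)/2^(k+1))))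
  · exact (measurableSet_Ico : MeasurableSet (Ico ((2*m+1:ℝ)/2^(k+1)) ((2*m+2:ℝ)/2^(k+1))))

lemma haar_abs_le (k m : ℕ) (t : ℝ) : |haar k m t| ≤ 1 := by
  unfold haar; split_ifs <;> simp

lemma haarIntOn (k m : ℕ) : IntegrableOn (haar k m) (Ico 0 1) := by
  refine Integrable.mono' (g := fun _ => (1:ℝ))
    (integrableOn_const (by simp [Real.volume_Ico]))
    ((haar_measurable k m).aestronglyMeasurable) ?_
  exact Filter.Eventually.of_forall fun t => by simpa using haar_abs_le k m t


lemma grid_le_iff {n M j : ℕ} {t : ℝ} (ht : t ∈ Ico ((j:ℝ)/2^n) (((j:ℝ)+1)/2^n)) :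
    ((M:ℝ)/2^n ≤ t ↔ M ≤ j) := by
  have hp : (0:ℝ) < 2^n := by positivity
  have h1 : (j:ℝ) ≤ t * 2^n := (div_le_iff₀ hp).mp ht.1
  have h2 : t * 2^n < (j:ℝ) + 1 := (lt_div_iff₀ hp).mp ht.2
  rw [div_le_iff₀ hp]
  constructor
  · intro h
    have : (M:ℝ) < (j:ℝ) + 1 := lt_of_le_of_lt h h2
    exact_mod_cast Nat.lt_succ_iff.mp (by exact_mod_cast (by push_cast at this ⊢; exact_mod_cast this : (M:ℝ) < ((j+1:ℕ):ℝ)))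
  · intro h
    exact le_trans (by exact_mod_cast h : (M:ℝ) ≤ (j:ℝ)) h1

lemma grid_lt_iff {n M j : ℕ} {t : ℝ} (ht : t ∈ Ico ((j:ℝ)/2^n) (((j:ℝ)+1)/2^n)) :
    (t < (M:ℝ)/2^n ↔ j < M) := by
  have hp : (0:ℝ) < 2^n := by positivity
  have h1 : (j:ℝ) ≤ t * 2^n := (div_le_iff₀ hp).mp ht.1
  have h2 : t * 2^n < (j:ℝ) + 1 := (lt_div_iff₀ hp).mp ht.2
  rw [lt_div_iff₀ hp]
  constructor
  · intro h
    by_contra hc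
    push_neg at hc
    exact absurd (lt_of_le_of_lt h1 h) (not_lt.2 (by exact_mod_cast hc))
  · intro h
    have : (j:ℝ) + 1 ≤ (M:ℝ) := by exact_mod_cast h
    linarith

lemma dyadic_cast (M k n : ℕ) (hk : k < n) :
    ((M:ℝ))/2^(k+1) = ((M * 2^(n-k-1) : ℕ) : ℝ)/2^n := by
  have h2 : (2:ℝ)^(n-k-1) * 2^(k+1) = 2^n := by rw [← pow_add]; congr 1; omega
  push_cast
  rw [div_eq_div_iff (by positivity) (by positivity)]
  nlinarith [h2]




lemma self_mem_grid (n j : ℕ) : ((j:ℝ)/2^n) ∈ Ico ((j:ℝ)/2^n) (((j:ℝ)+1)/2^n) :=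
  ⟨le_refl _, div_lt_div_of_pos_right (by linarith) (by positivity)⟩

lemma haar_const {n k m j : ℕ} (hk : k < n) {t : ℝ}
    (ht : t ∈ Ico ((j:ℝ)/2^n) (((j:ℝ)+1)/2^n)) :
    haar k m t = haar k m ((j:ℝ)/2^n) := by
  have hj := self_mem_grid n j
  have key_le : ∀ M : ℕ, (((M:ℕ):ℝ)/2^(k+1) ≤ t ↔ ((M:ℕ):ℝ)/2^(k+1) ≤ (j:ℝ)/2^n) := by
    intro M; rw [dyadic_cast M k n hk, grid_le_iff ht, grid_le_iff hj]
  have key_lt : ∀ M : ℕ, (t < ((M:ℕ):ℝ)/2^(k+1) ↔ (j:ℝ)/2^n < ((M:ℕ):ℝ)/2^(k+1)) := by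
    intro M; rw [dyadic_cast M k n hk, grid_lt_iff ht, grid_lt_iff hj]
  have c1 : (2*(m:ℝ)) = ((2*m:ℕ):ℝ) := by push_cast; ring
  have c2 : (((2*m:ℕ):ℝ)+1) = ((2*m+1:ℕ):ℝ) := by push_cast; ring
  have c3 : (((2*m:ℕ):ℝ)+2) = ((2*m+2:ℕ):ℝ) := by push_cast; ring
  simp only [haar, c1, c2, c3, key_le, key_lt]




lemma lin_int (C e u v : ℝ) :
    ∫ x in u..v, (C - x/2) * e = (C*(v-u) - (v^2-u^2)/4) * e := by
  have hfe : (fun x : ℝ => (C - x/2) * e) = fun x => C*e - x*(e/2) := by funext x; ring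
  rw [hfe, intervalIntegral.integral_sub (intervalIntegrable_const)
      ((intervalIntegral.intervalIntegrable_id).mul_const _),
    intervalIntegral.integral_const, intervalIntegral.integral_mul_const,
    integral_id, smul_eq_mul]
  ring

lemma key (n k m : ℕ) (hk : k < n) (g : ℝ → ℝ)
    (hg : ∀ j : ℕ, j < 2^n → ∀ t ∈ Ioo ((j:ℝ)/2^n) (((j:ℝ)+1)/2^n),
      g t = (2*(j:ℝ)+1)/2^(n+2) - t/2) :
    ∫ t in Ico (0:ℝ) 1, g t * haar k m t = 0 := by
  set a : ℕ → ℝ := fun j => (j:ℝ)/2^n with ha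
  have hcast : ∀ j : ℕ, a (j+1) = ((j:ℝ)+1)/2^n := by intro j; simp [ha]
  have hle : ∀ j : ℕ, a j ≤ a (j+1) := by
    intro j; rw [hcast j]
    show (j:ℝ)/2^n ≤ ((j:ℝ)+1)/2^n
    gcongr
    linarith
  have heq : ∀ j : ℕ, j < 2^n → EqOn (fun t => g t * haar k m t)
      (fun t => ((2*(j:ℝ)+1)/2^(n+2) - t/2) * haar k m ((j:ℝ)/2^n)) (Ioo (a j) (a (j+1))) := by
    intro j hj t ht
    rw [hcast j] at ht
    have ht' : t ∈ Ico ((j:ℝ)/2^n) (((j:ℝ)+1)/2^n) := ⟨ht.1.le, ht.2⟩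
    simp only
    rw [hg j hj t ht, haar_const hk ht']
  have hphi : ∀ j : ℕ, IntegrableOn
      (fun t : ℝ => ((2*(j:ℝ)+1)/2^(n+2) - t/2) * haar k m ((j:ℝ)/2^n)) (Ioc (a j) (a (j+1))) := by
    intro j
    exact (((continuous_const.sub (continuous_id.div_const 2)).mul continuous_const).integrableOn_Icc
      (a := a j) (b := a (j+1))).mono_set Ioc_subset_Icc_self
  have hii : ∀ j : ℕ, j < 2^n → IntervalIntegrable (fun t => g t * haar k m t) volume (a j) (a (j+1)) := by
    intro j hj
    rw [intervalIntegrable_iff_integrableOn_Ioc_of_le (hle j)]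
    have h1 : IntegrableOn (fun t => g t * haar k m t) (Ioo (a j) (a (j+1))) :=
      IntegrableOn.congr_fun ((hphi j).mono_set Ioo_subset_Ioc_self) (heq j hj).symm measurableSet_Ioo
    exact h1.congr_set_ae Ioo_ae_eq_Ioc.symm
  have hz : ∀ j : ℕ, j < 2^n → ∫ x in a j..a (j+1), g x * haar k m x = 0 := by
    intro j hj
    rw [intervalIntegral.integral_of_le (hle j), ← setIntegral_congr_set Ioo_ae_eq_Ioc,
      setIntegral_congr_fun measurableSet_Ioo (heq j hj),
      setIntegral_congr_set Ioo_ae_eq_Ioc, ← intervalIntegral.integral_of_le (hle j), lin_int]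
    have hv : a (j+1) = ((j:ℝ)+1)/2^n := hcast j
    have hu : a j = (j:ℝ)/2^n := rfl
    rw [hv, hu]
    have : (2*(j:ℝ)+1)/2^(n+2) * (((j:ℝ)+1)/2^n - (j:ℝ)/2^n)
        - ((((j:ℝ)+1)/2^n)^2 - ((j:ℝ)/2^n)^2)/4 = 0 := by
      have h2 : (2:ℝ)^(n+2) = 2^n * 4 := by rw [pow_add]; norm_num
      field_simp
      ring
    rw [this, zero_mul]
  have e0 : a 0 = 0 := by simp [ha]
  have e1 : a (2^n) = 1 := by
    simp only [ha, Nat.cast_pow, Nat.cast_ofNat]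
    field_simp
  rw [setIntegral_congr_set Ico_ae_eq_Ioc, ← intervalIntegral.integral_of_le zero_le_one]
  conv_lhs => rw [← e0, ← e1]
  rw [← intervalIntegral.sum_integral_adjacent_intervals hii]
  exact Finset.sum_eq_zero fun j hj => hz j (Finset.mem_range.mp hj)


lemma count_lemma {n j : ℕ} (hj : j < 2^n) {t : ℝ}
    (ht : t ∈ Ioo ((j:ℝ)/2^n) (((j:ℝ)+1)/2^n)) :
    ∑ j' ∈ Finset.range (2^n), ((if (j':ℝ)/2^n < t then (1:ℝ) else 0)
      + (if 1 - (j':ℝ)/2^n < t then (1:ℝ) else 0)) = 2*(j:ℝ)+1 := by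
  have hp : (0:ℝ) < 2^n := by positivity
  have h1 : (j:ℝ) < t * 2^n := (div_lt_iff₀ hp).mp ht.1
  have h2 : t * 2^n < (j:ℝ) + 1 := (lt_div_iff₀ hp).mp ht.2
  rw [Finset.sum_add_distrib]
  have hA : ∀ j' ∈ Finset.range (2^n),
      (if (j':ℝ)/2^n < t then (1:ℝ) else 0) = (if j' ≤ j then (1:ℝ) else 0) := by
    intro j' _
    congr 1
    apply propext
    rw [div_lt_iff₀ hp]
    constructor
    · intro h
      by_contra hc
      push_neg at hc
      have : ((j:ℝ)+1) ≤ (j':ℝ) := by exact_mod_cast hc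
      linarith
    · intro h
      have : (j':ℝ) ≤ (j:ℝ) := by exact_mod_cast h
      linarith
  have hB : ∀ j' ∈ Finset.range (2^n),
      (if 1 - (j':ℝ)/2^n < t then (1:ℝ) else 0) = (if 2^n ≤ j + j' then (1:ℝ) else 0) := by
    intro j' _
    congr 1
    apply propext
    have hkey : (j':ℝ)/2^n * 2^n = (j':ℝ) := div_mul_cancel₀ _ (ne_of_gt hp)
    have hiff : 1 - (j':ℝ)/2^n < t ↔ (2^n:ℝ) - j' < t * 2^n := by
      constructor
      · intro h
        nlinarith [mul_lt_mul_of_pos_right h hp]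
      · intro h
        by_contra hc
        push_neg at hc
        nlinarith [mul_le_mul_of_nonneg_right hc hp.le]
    rw [hiff]
    constructor
    · intro h
      by_contra hc
      push_neg at hc
      have : ((j:ℝ)+(j':ℝ)+1) ≤ (2^n:ℝ) := by exact_mod_cast hc
      linarith
    · intro h
      have : (2^n:ℝ) ≤ (j:ℝ)+(j':ℝ) := by exact_mod_cast h
      linarith
  rw [Finset.sum_congr rfl hA, Finset.sum_congr rfl hB, Finset.sum_boole, Finset.sum_boole]
  have e1 : Finset.filter (fun j' => j' ≤ j) (Finset.range (2^n)) = Finset.range (j+1) := by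
    ext x; simp only [Finset.mem_filter, Finset.mem_range]; omega
  have e2 : Finset.filter (fun j' => 2^n ≤ j + j') (Finset.range (2^n)) = Finset.Ico (2^n - j) (2^n) := by
    ext x; simp only [Finset.mem_filter, Finset.mem_range, Finset.mem_Ico]; omega
  rw [e1, e2, Finset.card_range, Nat.card_Ico]
  have : 2^n - (2^n - j) = j := by omega
  rw [this]
  push_cast
  ring




lemma symPoint_fst_mem (n : ℕ) (σ : Fin n → Bool) (z : (Fin n → Bool) × Bool × Bool) :
    (symPoint n σ z).1 ∈ Icc (0:ℝ) 1 := by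
  obtain ⟨h1, h2⟩ := hamX_mem n z.1
  rcases z with ⟨t, e1, e2⟩
  simp only [symPoint]
  split_ifs <;> exact ⟨by linarith, by linarith⟩

lemma symPoint_snd_mem (n : ℕ) (σ : Fin n → Bool) (z : (Fin n → Bool) × Bool × Bool) :
    (symPoint n σ z).2 ∈ Icc (0:ℝ) 1 := by
  obtain ⟨h1, h2⟩ := hamY_mem n σ z.1
  rcases z with ⟨t, e1, e2⟩
  simp only [symPoint]
  split_ifs <;> exact ⟨by linarith, by linarith⟩

lemma ite_and_split (a b t1 t2 : ℝ) :
    (if a < t1 ∧ b < t2 then (1:ℝ) else 0)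
      = (if a < t1 then (1:ℝ) else 0) * (if b < t2 then (1:ℝ) else 0) := by
  by_cases h1 : a < t1 <;> by_cases h2 : b < t2 <;> simp [h1, h2]

-- inner integral over t2, for every t1
lemma psi1 (n : ℕ) (σ : Fin n → Bool) (t1 : ℝ) :
    ∫ t2 in Ico (0:ℝ) 1, discSym n σ t1 t2
      = (∑ z : (Fin n → Bool) × Bool × Bool,
          (if (symPoint n σ z).1 < t1 then (1:ℝ) else 0) * (1 - (symPoint n σ z).2)) / 2^(n+2)
        - t1/2 := by
  have hre : ∀ t2 : ℝ, discSym n σ t1 t2 =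
      (∑ z : (Fin n → Bool) × Bool × Bool,
        (if (symPoint n σ z).1 < t1 then (1:ℝ) else 0) * (if (symPoint n σ z).2 < t2 then (1:ℝ) else 0)) / 2^(n+2)
      - t1 * t2 := by
    intro t2
    rw [discSym]
    congr 1
    congr 1
    exact Finset.sum_congr rfl fun z _ => ite_and_split _ _ _ _
  simp only [hre]
  have hint1 : ∀ z : (Fin n → Bool) × Bool × Bool, IntegrableOn
      (fun t2 : ℝ => (if (symPoint n σ z).1 < t1 then (1:ℝ) else 0) * (if (symPoint n σ z).2 < t2 then (1:ℝ) else 0))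
      (Ico 0 1) := fun z => (indIntOn _).const_mul _
  rw [integral_sub (((integrable_finset_sum _ (fun z _ => hint1 z)).div_const _))
      (tIntOn.const_mul t1), MeasureTheory.integral_div, integral_finset_sum _ (fun z _ => hint1 z),
      MeasureTheory.integral_const_mul, tInt]
  congr 2
  · refine Finset.sum_congr rfl fun z _ => ?_
    rw [MeasureTheory.integral_const_mul, indInt _ (symPoint_snd_mem n σ z)]
  · ring

-- inner integral over t1, for every t2
lemma psi2 (n : ℕ) (σ : Fin n → Bool) (t2 : ℝ) :
    ∫ t1 in Ico (0:ℝ) 1, discSym n σ t1 t2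
      = (∑ z : (Fin n → Bool) × Bool × Bool,
          (1 - (symPoint n σ z).1) * (if (symPoint n σ z).2 < t2 then (1:ℝ) else 0)) / 2^(n+2)
        - t2/2 := by
  have hre : ∀ t1 : ℝ, discSym n σ t1 t2 =
      (∑ z : (Fin n → Bool) × Bool × Bool,
        (if (symPoint n σ z).1 < t1 then (1:ℝ) else 0) * (if (symPoint n σ z).2 < t2 then (1:ℝ) else 0)) / 2^(n+2)
      - t2 * t1 := by
    intro t1
    rw [discSym]
    congr 1
    · congr 1
      exact Finset.sum_congr rfl fun z _ => ite_and_split _ _ _ _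
    · ring
  simp only [hre]
  have hint1 : ∀ z : (Fin n → Bool) × Bool × Bool, IntegrableOn
      (fun t1 : ℝ => (if (symPoint n σ z).1 < t1 then (1:ℝ) else 0) * (if (symPoint n σ z).2 < t2 then (1:ℝ) else 0))
      (Ico 0 1) := fun z => (indIntOn _).mul_const _
  rw [integral_sub (((integrable_finset_sum _ (fun z _ => hint1 z)).div_const _))
      (tIntOn.const_mul t2), MeasureTheory.integral_div, integral_finset_sum _ (fun z _ => hint1 z),
      MeasureTheory.integral_const_mul, tInt]
  congr 2
  · refine Finset.sum_congr rfl fun z _ => ?_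
    rw [MeasureTheory.integral_mul_const, indInt _ (symPoint_fst_mem n σ z)]
  · ring

lemma collapseA (n : ℕ) (σ : Fin n → Bool) (t1 : ℝ) :
    ∑ z : (Fin n → Bool) × Bool × Bool,
        (if (symPoint n σ z).1 < t1 then (1:ℝ) else 0) * (1 - (symPoint n σ z).2)
      = ∑ j' ∈ Finset.range (2^n), ((if (j':ℝ)/2^n < t1 then (1:ℝ) else 0)
          + (if 1 - (j':ℝ)/2^n < t1 then (1:ℝ) else 0)) := by
  rw [Fintype.sum_prod_type]
  rw [← sum_hamX n (fun y => (if y < t1 then (1:ℝ) else 0) + (if 1 - y < t1 then (1:ℝ) else 0))]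
  refine Finset.sum_congr rfl fun t _ => ?_
  rw [Fintype.sum_prod_type]
  simp [Fintype.sum_bool, symPoint]
  by_cases h1 : hamX n t < t1 <;> by_cases h2 : 1 - hamX n t < t1 <;>
    simp [h1, h2] <;> ring

lemma collapseB (n : ℕ) (σ : Fin n → Bool) (t2 : ℝ) :
    ∑ z : (Fin n → Bool) × Bool × Bool,
        (1 - (symPoint n σ z).1) * (if (symPoint n σ z).2 < t2 then (1:ℝ) else 0)
      = ∑ j' ∈ Finset.range (2^n), ((if (j':ℝ)/2^n < t2 then (1:ℝ) else 0)
          + (if 1 - (j':ℝ)/2^n < t2 then (1:ℝ) else 0)) := by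
  rw [Fintype.sum_prod_type]
  rw [← sum_hamY n σ (fun y => (if y < t2 then (1:ℝ) else 0) + (if 1 - y < t2 then (1:ℝ) else 0))]
  refine Finset.sum_congr rfl fun t _ => ?_
  rw [Fintype.sum_prod_type]
  simp [Fintype.sum_bool, symPoint]
  by_cases h1 : hamY n σ t < t2 <;> by_cases h2 : 1 - hamY n σ t < t2 <;>
    simp [h1, h2] <;> ring

lemma psi1_on_grid (n : ℕ) (σ : Fin n → Bool) (j : ℕ) (hj : j < 2^n) (t1 : ℝ)
    (ht : t1 ∈ Ioo ((j:ℝ)/2^n) (((j:ℝ)+1)/2^n)) :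
    ∫ t2 in Ico (0:ℝ) 1, discSym n σ t1 t2 = (2*(j:ℝ)+1)/2^(n+2) - t1/2 := by
  rw [psi1, collapseA, count_lemma hj ht]

lemma psi2_on_grid (n : ℕ) (σ : Fin n → Bool) (j : ℕ) (hj : j < 2^n) (t2 : ℝ)
    (ht : t2 ∈ Ioo ((j:ℝ)/2^n) (((j:ℝ)+1)/2^n)) :
    ∫ t1 in Ico (0:ℝ) 1, discSym n σ t1 t2 = (2*(j:ℝ)+1)/2^(n+2) - t2/2 := by
  rw [psi2, collapseB, count_lemma hj ht]

-- conjunct 2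
lemma conj2 (n : ℕ) (σ : Fin n → Bool) (k m : ℕ) (hk : k < n) :
    (∫ t1 in Set.Ico (0 : ℝ) 1, ∫ t2 in Set.Ico (0 : ℝ) 1,
      discSym n σ t1 t2 * haar k m t1) = 0 := by
  have h1 : ∀ t1 : ℝ, (∫ t2 in Set.Ico (0 : ℝ) 1, discSym n σ t1 t2 * haar k m t1)
      = (∫ t2 in Set.Ico (0 : ℝ) 1, discSym n σ t1 t2) * haar k m t1 := by
    intro t1; rw [MeasureTheory.integral_mul_const]
  simp only [h1]
  exact key n k m hk _ (fun j hj t ht => psi1_on_grid n σ j hj t ht)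

-- joint integrability for Fubini
lemma jointInt (n : ℕ) (σ : Fin n → Bool) (k m : ℕ) :
    Integrable (Function.uncurry fun t1 t2 => discSym n σ t1 t2 * haar k m t2)
      ((volume.restrict (Ico (0:ℝ) 1)).prod (volume.restrict (Ico (0:ℝ) 1))) := by
  set μ := volume.restrict (Ico (0:ℝ) 1)
  have hfin : μ (univ) < ⊤ := by
    simp [μ, Measure.restrict_apply, Real.volume_Ico]
  have hIhaar : Integrable (haar k m) μ := haarIntOn k m
  have hIid : Integrable (fun t : ℝ => t) μ := tIntOn
  have hIth : Integrable (fun t2 : ℝ => (if True then 1 else 0) * haar k m t2) μ := by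
    simpa using hIhaar
  have hIyh : ∀ y : ℝ, Integrable (fun t2 : ℝ => (if y < t2 then (1:ℝ) else 0) * haar k m t2) μ := by
    intro y
    refine hIhaar.bdd_mul (c := 1) ?_ (Filter.Eventually.of_forall fun t => ?_)
    · have : (fun t2 : ℝ => if y < t2 then (1:ℝ) else 0) = (Ioi y).indicator (fun _ => (1:ℝ)) := by
        funext t; simp [indicator, mem_Ioi]
      rw [this]
      exact ((measurable_const.indicator measurableSet_Ioi)).aestronglyMeasurable
    · split_ifs <;> simp
  have hIhid : Integrable (fun t2 : ℝ => haar k m t2 * t2) μ := by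
    refine hIid.bdd_mul (haar_measurable k m).aestronglyMeasurable (c := 1) (Filter.Eventually.of_forall fun t => ?_)
    have := haar_abs_le k m t
    simpa using this
  have hI1 : Integrable (fun p : ℝ × ℝ =>
      (∑ z : (Fin n → Bool) × Bool × Bool,
        (if (symPoint n σ z).1 < p.1 then (1:ℝ) else 0)
          * ((if (symPoint n σ z).2 < p.2 then (1:ℝ) else 0) * haar k m p.2)) / 2^(n+2))
      (μ.prod μ) := by
    refine Integrable.div_const ?_ _
    refine integrable_finset_sum _ (fun z _ => ?_)
    exact Integrable.mul_prod (indIntOn _) (hIyh _)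
  have hI2 : Integrable (fun p : ℝ × ℝ => p.1 * (haar k m p.2 * p.2)) (μ.prod μ) :=
    Integrable.mul_prod hIid hIhid
  refine (hI1.sub hI2).congr (Filter.Eventually.of_forall fun p => ?_)
  simp only [Pi.sub_apply, Function.uncurry, discSym]
  rw [sub_mul, div_mul_eq_mul_div, Finset.sum_mul]
  congr 1
  · congr 1
    exact Finset.sum_congr rfl fun z _ => by rw [ite_and_split]; ring
  · ring

-- conjunct 1
lemma conj1 (n : ℕ) (σ : Fin n → Bool) (k m : ℕ) (hk : k < n) :
    (∫ t1 in Set.Ico (0 : ℝ) 1, ∫ t2 in Set.Ico (0 : ℝ) 1,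
      discSym n σ t1 t2 * haar k m t2) = 0 := by
  rw [MeasureTheory.integral_integral_swap (jointInt n σ k m)]
  have h1 : ∀ t2 : ℝ, (∫ t1 in Set.Ico (0 : ℝ) 1, discSym n σ t1 t2 * haar k m t2)
      = (∫ t1 in Set.Ico (0 : ℝ) 1, discSym n σ t1 t2) * haar k m t2 := by
    intro t2; rw [MeasureTheory.integral_mul_const]
  simp only [h1]
  exact key n k m hk _ (fun j hj t ht => psi2_on_grid n σ j hj t ht)

end AuxHaar

/-- Proposition (iv): for the local discrepancy `D` of the symmetrized Hammersley type
multiset `R̃_n`, the Haar coefficients `μ_{(-1,k),(0,m)}(D)` and `μ_{(k,-1),(m,0)}(D)`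
vanish for all `k < n` and `m ∈ {0,…,2^k-1}`. -/
theorem disc_haar_coeff_neg_vanish (n : ℕ) (σ : Fin n → Bool) (k m : ℕ)
    (hk : k < n) (hm : m < 2 ^ k) :
    (∫ t1 in Set.Ico (0 : ℝ) 1, ∫ t2 in Set.Ico (0 : ℝ) 1,
      discSym n σ t1 t2 * haar k m t2) = 0 ∧
    (∫ t1 in Set.Ico (0 : ℝ) 1, ∫ t2 in Set.Ico (0 : ℝ) 1,
      discSym n σ t1 t2 * haar k m t1) = 0 := by
  exact ⟨conj1 n σ k m hk, conj2 n σ k m hk⟩
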